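/- Let n be a strictly positive integer, p a prime number, and ℓ a non-negative integer. If over every algebraically closed field of characteristic p every Casas–Alvero polynomial of degree n is an n-th power of a linear polynomial, then over every algebraically closed field of characteristic 0 every Casas–Alvero polynomial of degree n·p^ℓ is an (n·p^ℓ)-th power of a linear polynomial. -/

import Mathlib

set_option maxHeartbeats 1600000
set_option synthInstance.maxHeartbeats 800000


open Polynomial MvPolynomial

/-- `f` is a Casas–Alvero polynomial of degree `n`: it is monic of degree `n` and for each
`i ∈ {1, …, n-1}` it has a nonconstant common factor with its `i`-th Hasse derivative. -/
def IsCasasAlvero {K : Type} [Field K] (n : ℕ) (f : K[X]) : Prop :=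
  f.Monic ∧ f.natDegree = n ∧
    ∀ i ∈ Finset.Ioo 0 n,
      ∃ g : K[X], 0 < g.degree ∧ g ∣ f ∧ g ∣ Polynomial.hasseDeriv i f

/-- `p` is a bad prime for `n`: `p` is prime and there are an algebraically closed field `K` of
characteristic `p` and a Casas–Alvero polynomial of degree `n` over `K` which is not an `n`-th
power of a linear polynomial. -/
def IsBadPrime (n p : ℕ) : Prop :=
  p.Prime ∧ ∃ (K : Type) (_ : Field K), IsAlgClosed K ∧ CharP K p ∧
    ∃ f : K[X], IsCasasAlvero n f ∧ ¬ ∃ b : K, f = (Polynomial.X - Polynomial.C b) ^ n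

/-- The involution `Φ_j` on `K[x_1,…,x_m]`, sending `x_i ↦ x_i - x_j` for `i ≠ j` and
`x_j ↦ -x_j`. -/
noncomputable def Phi (K : Type) [CommRing K] {m : ℕ} (j : Fin m) :
    MvPolynomial (Fin m) K →ₐ[K] MvPolynomial (Fin m) K :=
  MvPolynomial.aeval fun i =>
    if i = j then -MvPolynomial.X j else MvPolynomial.X i - MvPolynomial.X j

/-- `Φ_j` for `j ∈ {1,…,n}` acting on `K[x_1,…,x_{n-1}]`; for `j = n` (the last index of `Fin n`)
this is the identity. -/
noncomputable def PhiFull (K : Type) [CommRing K] (n : ℕ) (j : Fin n) :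
    MvPolynomial (Fin (n - 1)) K →ₐ[K] MvPolynomial (Fin (n - 1)) K :=
  if h : (j : ℕ) < n - 1 then Phi K ⟨j, h⟩ else AlgHom.id K _

/-- `G_{T,i} = Φ_{j_i}(σ_i)`, where `i` ranges over `Fin (n-1)` (representing the degree `i+1`). -/
noncomputable def G (K : Type) [CommRing K] (n : ℕ) (T : Fin (n - 1) → Fin n)
    (i : Fin (n - 1)) : MvPolynomial (Fin (n - 1)) K :=
  PhiFull K n (T i) (MvPolynomial.esymm (Fin (n - 1)) K ((i : ℕ) + 1))

/-- `d = (n² - 3n + 4)/2`. -/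
def casasD (n : ℕ) : ℕ := (n ^ 2 - 3 * n + 4) / 2

/-- `C = binom((n²-n)/2, n-2)`, the number of monomials of degree `d` in `n-1` variables. -/
def casasC (n : ℕ) : ℕ := Nat.choose ((n ^ 2 - n) / 2) (n - 2)

/-- `D = Σ_{i=1}^{n-1} binom(d-i+n-2, n-2)`, the number of rows of `M_T`. -/
def casasDD (n : ℕ) : ℕ :=
  ∑ i ∈ Finset.Icc 1 (n - 1), Nat.choose (casasD n - i + n - 2) (n - 2)

/-- The matrix `M_T` over `ℤ`, whose rows, indexed by pairs `(i, α)` with `|α| = d - i`, are the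
coefficient vectors of `x^α · G_{T,i}` with respect to the monomials of degree `d`
(a monomial of degree `e` in `n-1` variables is encoded as an element of `Sym (Fin (n-1)) e`). -/
noncomputable def casasM (n : ℕ) (T : Fin (n - 1) → Fin n) :
    Matrix ((i : Fin (n - 1)) × Sym (Fin (n - 1)) (casasD n - ((i : ℕ) + 1)))
      (Sym (Fin (n - 1)) (casasD n)) ℤ :=
  fun r c =>
    MvPolynomial.coeff (Multiset.toFinsupp (c : Multiset (Fin (n - 1))))
      (MvPolynomial.monomial (Multiset.toFinsupp (r.2 : Multiset (Fin (n - 1)))) 1 * G ℤ n T r.1)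

/-- `J_T`: the greatest common divisor of all `C × C` minors of `M_T`. -/
noncomputable def casasJ (n : ℕ) (T : Fin (n - 1) → Fin n) : ℤ :=
  Finset.gcd (Finset.univ.filter fun
      f : Sym (Fin (n - 1)) (casasD n) →
        (i : Fin (n - 1)) × Sym (Fin (n - 1)) (casasD n - ((i : ℕ) + 1)) =>
      Function.Injective f)
    fun f => ((casasM n T).submatrix f id).det

/-- The upper bound `C! · ∏_{i=1}^{n-1} binom(i+n-2, n-2)^binom(d-i+n-2, n-2)`. -/
def casasBound (n : ℕ) : ℕ :=
  (casasC n).factorial * ∏ i ∈ Finset.Icc 1 (n - 1),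
    Nat.choose (i + n - 2) (n - 2) ^ Nat.choose (casasD n - i + n - 2) (n - 2)

noncomputable section
namespace CAWork


/-- esymm of the multiset of differences `v u - v c`. -/
def myE {m : ℕ} {A : Type*} [CommRing A] (v : Fin m → A) (c : Fin m) (s : ℕ) : A :=
  (Multiset.map (fun u => v u - v c) Finset.univ.val).esymm s

theorem esymm_hom {A B : Type*} [CommRing A] [CommRing B] (φ : A →+* B)
    (s : Multiset A) (k : ℕ) : (s.map φ).esymm k = φ (s.esymm k) := by
  simp only [Multiset.esymm, Multiset.powersetCard_map, Multiset.map_map]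
  rw [← Multiset.sum_hom _ φ, Multiset.map_map]
  congr 1
  apply Multiset.map_congr rfl
  intro t _
  exact Multiset.prod_hom t φ

theorem esymm_scale {A : Type*} [CommRing A] (t : A) (s : Multiset A) (k : ℕ) :
    (s.map (fun x => t * x)).esymm k = t ^ k * s.esymm k := by
  simp only [Multiset.esymm, Multiset.powersetCard_map, Multiset.map_map]
  rw [← Multiset.sum_map_mul_left]
  apply congrArg
  apply Multiset.map_congr rfl
  intro u hu
  have hcard : Multiset.card u = k := (Multiset.mem_powersetCard.mp hu).2
  simp only [Function.comp_apply]
  calc (Multiset.map (fun x => t * x) u).prod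
      = (Multiset.map (fun _ => t) u).prod * (Multiset.map id u).prod := by
        rw [← Multiset.prod_map_mul]; rfl
    _ = t ^ k * u.prod := by
        rw [Multiset.map_const', Multiset.prod_replicate, hcard, Multiset.map_id]

theorem myE_hom {m : ℕ} {A B : Type*} [CommRing A] [CommRing B] (φ : A →+* B)
    (v : Fin m → A) (c : Fin m) (s : ℕ) : φ (myE v c s) = myE (fun u => φ (v u)) c s := by
  rw [myE, myE, ← esymm_hom φ, Multiset.map_map]
  congr 2
  funext u
  simp

theorem myE_affine {m : ℕ} {A : Type*} [CommRing A] (t d : A)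
    (v : Fin m → A) (c : Fin m) (s : ℕ) :
    myE (fun u => t * v u + d) c s = t ^ s * myE v c s := by
  rw [myE, myE, ← esymm_scale t, Multiset.map_map]
  congr 2
  funext u
  simp only [Function.comp_apply]
  ring

/-- The bridge: `(H_i f).eval c` for `f = ∏ (Polynomial.X - Polynomial.C (r u))`. -/
theorem hasseDeriv_eval_prod {m : ℕ} {A : Type*} [CommRing A] (r : Fin m → A) (c : A)
    {i : ℕ} (hi : i ≤ m) :
    (hasseDeriv i (∏ u : Fin m, (Polynomial.X - Polynomial.C (r u)))).eval c
      = (-1) ^ (m - i) * (Multiset.map (fun u => r u - c) Finset.univ.val).esymm (m - i) := by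
  rw [← Polynomial.taylor_coeff]
  have h1 : (taylor c) (∏ u : Fin m, (Polynomial.X - Polynomial.C (r u)))
      = ∏ u : Fin m, (Polynomial.X - Polynomial.C (r u - c)) := by
    rw [Polynomial.taylor_apply, Polynomial.prod_comp]
    apply Finset.prod_congr rfl
    intro u _
    simp only [Polynomial.sub_comp, Polynomial.X_comp, Polynomial.C_comp, Polynomial.C_sub]
    ring
  rw [h1]
  have hcard : Multiset.card (Multiset.map (fun u => r u - c) Finset.univ.val) = m := by
    simp
  have h2 := Multiset.prod_X_sub_C_coeff
    (Multiset.map (fun u => r u - c) Finset.univ.val) (k := i) (by rw [hcard]; exact hi)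
  rw [hcard] at h2
  rw [← h2, Finset.prod_eq_multiset_prod, Multiset.map_map]
  rfl



/-- Build a Casas–Alvero polynomial from a root vector satisfying the esymm conditions. -/
theorem isCA_of_vec {m : ℕ} {Ω : Type} [Field Ω] (w : Fin m → Ω) (T : ℕ → Fin m)
    (hw : ∀ i ∈ Finset.Ioo 0 m, myE w (T i) (m - i) = 0) :
    IsCasasAlvero m (∏ u : Fin m, (Polynomial.X - Polynomial.C (w u))) := by
  refine ⟨monic_prod_of_monic _ _ fun u _ => Polynomial.monic_X_sub_C _, ?_, ?_⟩
  · rw [natDegree_prod_of_monic _ _ fun u _ => Polynomial.monic_X_sub_C _]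
    simp
  · intro i hi
    refine ⟨Polynomial.X - Polynomial.C (w (T i)), by rw [Polynomial.degree_X_sub_C]; exact zero_lt_one,
      Finset.dvd_prod_of_mem _ (Finset.mem_univ _), ?_⟩
    rw [Polynomial.dvd_iff_isRoot, IsRoot.def,
      hasseDeriv_eval_prod w (w (T i)) (le_of_lt (Finset.mem_Ioo.mp hi).2)]
    have := hw i hi
    rw [myE] at this
    rw [this, mul_zero]

/-- Extract a root vector from a Casas–Alvero polynomial over an alg. closed field. -/
theorem exists_vec_of_CA {K : Type} [Field K] [IsAlgClosed K] {f : K[X]} {m : ℕ}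
    (hf : IsCasasAlvero m f) :
    ∃ r : Fin m → K, f = ∏ u : Fin m, (Polynomial.X - Polynomial.C (r u)) ∧
      ∀ i ∈ Finset.Ioo 0 m, ∃ k : Fin m, myE r k (m - i) = 0 := by
  obtain ⟨hmon, hdeg, hca⟩ := hf
  have hsp : Splits f := IsAlgClosed.splits f
  have hroots : Multiset.card f.roots = m := by
    rw [(splits_iff_card_roots).mp hsp, hdeg]
  have hlen : f.roots.toList.length = m := by
    rw [Multiset.length_toList, hroots]
  subst hlen
  set l := f.roots.toList with hl
  set r : Fin l.length → K := fun u => l.get u with hr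
  have hmap : Multiset.map r Finset.univ.val = f.roots := by
    rw [Fin.univ_def]
    show ((List.finRange l.length).map l.get : Multiset K) = _
    rw [List.map_get_finRange, hl, Multiset.coe_toList]
  have hprod : f = ∏ u : Fin l.length, (Polynomial.X - Polynomial.C (r u)) := by
    conv_lhs => rw [hsp.eq_prod_roots_of_monic hmon]
    rw [Finset.prod_eq_multiset_prod, ← hmap, Multiset.map_map]
    rfl
  refine ⟨r, hprod, ?_⟩
  intro i hi
  obtain ⟨g, hg0, hgf, hgh⟩ := hca i hi
  obtain ⟨a, ha⟩ := IsAlgClosed.exists_root g (fun h => by rw [h] at hg0; exact lt_irrefl _ hg0)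
  have hfa : f.eval a = 0 := Polynomial.eval_eq_zero_of_dvd_of_eval_eq_zero hgf ha
  have hha : (hasseDeriv i f).eval a = 0 := Polynomial.eval_eq_zero_of_dvd_of_eval_eq_zero hgh ha
  have : ∃ k : Fin l.length, a - r k = 0 := by
    rw [hprod, Polynomial.eval_prod] at hfa
    obtain ⟨k, _, hk⟩ := Finset.prod_eq_zero_iff.mp hfa
    exact ⟨k, by simpa using hk⟩
  obtain ⟨k, hk⟩ := this
  have hak : a = r k := sub_eq_zero.mp hk
  refine ⟨k, ?_⟩
  have hb := hasseDeriv_eval_prod r a (le_of_lt (Finset.mem_Ioo.mp hi).2)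
  rw [← hprod, hha] at hb
  have h2 : ((-1 : K)) ^ (l.length - i) ≠ 0 := pow_ne_zero _ (neg_ne_zero.mpr one_ne_zero)
  have h3 := (mul_eq_zero.mp hb.symm).resolve_left h2
  rw [hak] at h3
  exact h3



/-- Transfer a characteristic-zero counterexample of degree `m` to characteristic `p`. -/
theorem transfer (p : ℕ) (hp : p.Prime) (m : ℕ) (hm : 2 ≤ m)
    (K : Type) [Field K] [IsAlgClosed K] [CharP K 0] (f : K[X])
    (hf : IsCasasAlvero m f) (hnt : ¬∃ b : K, f = (Polynomial.X - Polynomial.C b) ^ m) :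
    ∃ (Ω : Type) (_ : Field Ω), IsAlgClosed Ω ∧ CharP Ω p ∧
      ∃ F : Polynomial Ω, IsCasasAlvero m F ∧ ¬∃ b : Ω, F = (Polynomial.X - Polynomial.C b) ^ m := by
  haveI : CharZero K := CharP.charP_to_charZero K
  have hm0 : 0 < m := by omega
  obtain ⟨r, hfr, hcond⟩ := exists_vec_of_CA hf
  -- two distinct roots
  have hab : ∃ a0 b0 : Fin m, r a0 ≠ r b0 := by
    by_contra hcon
    push_neg at hcon
    apply hnt
    refine ⟨r ⟨0, hm0⟩, ?_⟩
    rw [hfr]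
    rw [Finset.prod_congr rfl (fun u _ => by rw [hcon u ⟨0, hm0⟩]), Finset.prod_const]
    simp
  obtain ⟨a0, b0, hab⟩ := hab
  -- choose T
  have hTex : ∀ i : ℕ, ∃ k : Fin m, i ∈ Finset.Ioo 0 m → myE r k (m - i) = 0 := by
    intro i
    by_cases hi : i ∈ Finset.Ioo 0 m
    · obtain ⟨k, hk⟩ := hcond i hi
      exact ⟨k, fun _ => hk⟩
    · exact ⟨⟨0, hm0⟩, fun h => absurd h hi⟩
  choose T hT using hTex
  -- normalize
  set c0 : K := (r b0 - r a0)⁻¹ with hc0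
  have hc0ne : r b0 - r a0 ≠ 0 := sub_ne_zero.mpr (Ne.symm hab)
  set r' : Fin m → K := fun u => c0 * r u + (-(c0 * r a0)) with hr'
  have hr'a0 : r' a0 = 0 := by rw [hr']; ring
  have hr'b0 : r' b0 = 1 := by
    rw [hr']
    field_simp [hc0]
    rw [← sub_eq_add_neg, hc0, inv_mul_cancel₀ hc0ne]
  have hcond' : ∀ i ∈ Finset.Ioo 0 m, myE r' (T i) (m - i) = 0 := by
    intro i hi
    rw [hr', myE_affine, hT i hi, mul_zero]
  -- the algebraic closure of ℚ
  set F := AlgebraicClosure ℚ with hF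
  haveI : Algebra.IsAlgebraic ℚ F := by
    convert AlgebraicClosure.isAlgebraic ℚ
    · rfl
    · exact Subsingleton.elim _ _
  set gens : Set (MvPolynomial (Fin m) F) :=
    insert (MvPolynomial.X a0) (insert (MvPolynomial.X b0 - 1)
      ((fun i => myE (fun u => (MvPolynomial.X u : MvPolynomial (Fin m) F)) (T i) (m - i)) ''
        (Set.Ioo 0 m))) with hgens
  set I : Ideal (MvPolynomial (Fin m) F) := Ideal.span gens with hI
  have hzl : (MvPolynomial.zeroLocus F I).Nonempty := by
    rw [Set.nonempty_iff_ne_empty]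
    intro hempty
    -- then 1 ∈ I, contradiction by evaluating at r' in K
    have h1 : (1 : MvPolynomial (Fin m) F) ∈ I := by
      have hrad : I.radical = ⊤ := by
        rw [← MvPolynomial.vanishingIdeal_zeroLocus_eq_radical (K := F), hempty]
        rw [eq_top_iff]
        intro q _
        rw [MvPolynomial.mem_vanishingIdeal_iff]
        intro x hx
        exact absurd hx (Set.notMem_empty x)
      exact (Ideal.radical_eq_top).mp hrad ▸ trivial
    set φ : F →ₐ[ℚ] K := IsAlgClosed.lift with hφ
    set ev : MvPolynomial (Fin m) F →+* K := MvPolynomial.eval₂Hom φ.toRingHom r' with hev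
    have hker : ∀ q ∈ gens, ev q = 0 := by
      intro q hq
      rw [hgens] at hq
      rcases hq with rfl | hq
      · rw [hev]
        simpa using hr'a0
      rcases hq with rfl | hq
      · rw [hev]
        simp [hr'b0]
      obtain ⟨i, hi, rfl⟩ := hq
      rw [hev, myE_hom]
      have : (fun u => (MvPolynomial.eval₂Hom φ.toRingHom r') (MvPolynomial.X u)) = r' := by
        funext u
        simp
      rw [this]
      exact hcond' i (by simpa using hi)
    have hIker : I ≤ RingHom.ker ev := by
      rw [hI, Ideal.span_le]
      intro q hq
      exact hker q hq
    have := hIker h1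
    rw [RingHom.mem_ker, map_one] at this
    exact one_ne_zero this
  obtain ⟨y, hy⟩ := hzl
  have hy : ∀ q ∈ I, MvPolynomial.eval y q = 0 := fun q hq => (MvPolynomial.mem_zeroLocus_iff).mp hy q hq
  have hya0 : y a0 = 0 := by
    have := hy _ (Ideal.subset_span (by rw [hgens]; exact Set.mem_insert _ _))
    simpa using this
  have hyb0 : y b0 = 1 := by
    have := hy _ (Ideal.subset_span (by
      rw [hgens]; exact Set.mem_insert_of_mem _ (Set.mem_insert _ _)))
    have h2 : MvPolynomial.eval y (MvPolynomial.X b0 - 1) = y b0 - 1 := by simp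
    rw [h2] at this
    have := sub_eq_zero.mp this
    exact this
  have hycond : ∀ i ∈ Finset.Ioo 0 m, myE y (T i) (m - i) = 0 := by
    intro i hi
    have hmem : (myE (fun u => (MvPolynomial.X u : MvPolynomial (Fin m) F)) (T i) (m - i)) ∈ I :=
      Ideal.subset_span (by
        rw [hgens]
        exact Set.mem_insert_of_mem _ (Set.mem_insert_of_mem _ ⟨i, by simpa using hi, rfl⟩))
    have := hy _ hmem
    rw [show (MvPolynomial.eval y) = ((MvPolynomial.eval y : MvPolynomial (Fin m) F →+* F)) from rfl] at this
    rw [myE_hom] at this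
    simpa using this
  -- restrict to a number field L
  haveI : Finite ↑(Set.range y) := Set.finite_range y
  have hint : ∀ x ∈ Set.range y, IsIntegral ℚ x := fun x _ =>
    (Algebra.IsAlgebraic.isAlgebraic (R := ℚ) x).isIntegral
  set L := IntermediateField.adjoin ℚ (Set.range y) with hLdef
  haveI : FiniteDimensional ℚ ↥L := IntermediateField.finiteDimensional_adjoin hint
  haveI : CharZero ↥L := charZero_of_injective_algebraMap (algebraMap ℚ ↥L).injective
  set y' : Fin m → ↥L := fun i => ⟨y i, IntermediateField.subset_adjoin ℚ _ ⟨i, rfl⟩⟩ with hy'def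
  have hcoe : (fun u => (algebraMap ↥L F) (y' u)) = y := rfl
  have hy'cond : ∀ i ∈ Finset.Ioo 0 m, myE y' (T i) (m - i) = 0 := by
    intro i hi
    apply (algebraMap ↥L F).injective
    rw [myE_hom, hcoe, map_zero]
    exact hycond i hi
  have hy'a0 : y' a0 = 0 := Subtype.ext hya0
  have hy'b0 : y' b0 = 1 := Subtype.ext hyb0
  -- the ring of integers and a prime over p
  set O := integralClosure ℤ ↥L with hOdef
  haveI hODed : IsDedekindDomain O := integralClosure.isDedekindDomain ℤ ℚ ↥L
  haveI : IsFractionRing O ↥L := IsIntegralClosure.isFractionRing_of_finite_extension ℤ ℚ ↥L O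
  haveI : Algebra.IsIntegral ℤ O := IsIntegralClosure.isIntegral_algebra ℤ ↥L
  have halgInj : Function.Injective (algebraMap ℤ O) := by
    intro x x' hxx
    have : (algebraMap ℤ ↥L) x = (algebraMap ℤ ↥L) x' := by
      rw [IsScalarTower.algebraMap_apply ℤ O ↥L, IsScalarTower.algebraMap_apply ℤ O ↥L, hxx]
    exact Int.cast_injective this
  haveI hpprime : (Ideal.span {((p : ℤ))}).IsPrime :=
    (Ideal.span_singleton_prime (by exact_mod_cast hp.ne_zero)).mpr
      (Nat.prime_iff_prime_int.mp hp)
  obtain ⟨P, -, hPprime, hPcomap⟩ :=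
    Ideal.exists_ideal_over_prime_of_isIntegral (Ideal.span {((p : ℤ))}) (⊥ : Ideal O)
      (by
        intro x hx
        have : (algebraMap ℤ O) x = 0 := hx
        rw [← map_zero (algebraMap ℤ O)] at this
        rw [halgInj this]
        exact Ideal.zero_mem _)
  haveI := hPprime
  have hPne : P ≠ ⊥ := by
    intro hPbot
    rw [hPbot] at hPcomap
    have : ((p : ℤ)) ∈ Ideal.comap (algebraMap ℤ O) (⊥ : Ideal O) := by
      rw [hPcomap]; exact Ideal.mem_span_singleton_self _
    have h0 : (algebraMap ℤ O) (p : ℤ) = 0 := this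
    rw [← map_zero (algebraMap ℤ O)] at h0
    have := halgInj h0
    exact_mod_cast absurd this (by exact_mod_cast hp.ne_zero)
  set v : IsDedekindDomain.HeightOneSpectrum O := ⟨P, hPprime, hPne⟩ with hvdef
  set val := v.valuation (K := ↥L) with hvaldef
  -- pick index with maximal valuation
  obtain ⟨j, -, hj⟩ := Finset.exists_max_image Finset.univ (fun i => val (y' i))
    ⟨b0, Finset.mem_univ _⟩
  have hvj1 : 1 ≤ val (y' j) := by
    have := hj b0 (Finset.mem_univ _)
    rwa [hy'b0, map_one] at this
  have hyjne : y' j ≠ 0 := by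
    intro h
    rw [h, map_zero] at hvj1
    exact absurd hvj1 (not_le_of_gt zero_lt_one)
  have hvaljne : val (y' j) ≠ 0 := (Valuation.ne_zero_iff val).mpr hyjne
  set z : Fin m → ↥L := fun i => (y' j)⁻¹ * y' i + 0 with hzdef
  have hz : ∀ i, val (z i) ≤ 1 := by
    intro i
    rw [hzdef]
    simp only [add_zero]
    rw [map_mul, map_inv₀, mul_comm]
    calc val (y' i) * (val (y' j))⁻¹ ≤ val (y' j) * (val (y' j))⁻¹ :=
          mul_le_mul_left (hj i (Finset.mem_univ _)) _
      _ = 1 := mul_inv_cancel₀ hvaljne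
  set A := val.valuationSubring with hAdef
  set zz : Fin m → ↥A := fun i => ⟨z i, (Valuation.mem_valuationSubring_iff _ _).mpr (hz i)⟩
    with hzzdef
  have hzzcoe : (fun u => (A.subtype) (zz u)) = z := rfl
  have hzzcond : ∀ i ∈ Finset.Ioo 0 m, myE zz (T i) (m - i) = 0 := by
    intro i hi
    apply Subtype.coe_injective
    have h1 := myE_hom (A.subtype) zz (T i) (m - i)
    rw [hzzcoe] at h1
    have h2 : myE z (T i) (m - i) = 0 := by
      rw [hzdef, myE_affine, hy'cond i hi, mul_zero]
    rw [h2] at h1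
    exact h1
  have hzza0 : zz a0 = 0 := by
    apply Subtype.coe_injective
    show z a0 = 0
    rw [hzdef]
    simp [hy'a0]
  have hzzj : zz j = 1 := by
    apply Subtype.coe_injective
    show z j = 1
    rw [hzdef]
    simp [inv_mul_cancel₀ hyjne]
  have haj : a0 ≠ j := by
    intro h
    rw [← h] at hzzj
    rw [hzza0] at hzzj
    exact zero_ne_one hzzj
  -- residue field
  set κ := IsLocalRing.ResidueField ↥A with hκdef
  have hpmax : ((p : ↥A)) ∈ IsLocalRing.maximalIdeal ↥A := by
    rw [ValuationSubring.valuation_lt_one_iff]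
    rw [← (Valuation.isEquiv_valuation_valuationSubring val).lt_one_iff_lt_one]
    have hc1 : (((p : ↥A) : ↥L)) = ((p : ↥L)) := by push_cast; ring
    have hc2 : ((p : ↥L)) = algebraMap O ↥L ((p : O)) := (map_natCast (algebraMap O ↥L) p).symm
    rw [hc1, hc2, hvaldef]
    rw [IsDedekindDomain.HeightOneSpectrum.valuation_lt_one_iff_dvd]
    rw [Ideal.dvd_iff_le, Ideal.span_le, Set.singleton_subset_iff]
    have hmem : ((p:ℤ)) ∈ Ideal.comap (algebraMap ℤ O) P := by
      rw [hPcomap]; exact Ideal.mem_span_singleton_self _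
    have : (algebraMap ℤ O) ((p:ℤ)) ∈ P := hmem
    simpa using this
  have hp0 : (p : κ) = 0 := by
    rw [← map_natCast (IsLocalRing.residue ↥A) p]
    exact Ideal.Quotient.eq_zero_iff_mem.mpr hpmax
  haveI : CharP κ p := (CharP.charP_iff_prime_eq_zero hp).mpr hp0
  set Ω := AlgebraicClosure κ with hΩdef
  haveI : CharP Ω p := charP_of_injective_ringHom (algebraMap κ Ω).injective p
  set ψ : ↥A →+* Ω := (algebraMap κ Ω).comp (IsLocalRing.residue ↥A) with hψdef
  set w : Fin m → Ω := fun i => ψ (zz i) with hwdef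
  have hwcond : ∀ i ∈ Finset.Ioo 0 m, myE w (T i) (m - i) = 0 := by
    intro i hi
    have h1 := myE_hom ψ zz (T i) (m - i)
    rw [hzzcond i hi, map_zero] at h1
    exact h1.symm
  refine ⟨Ω, inferInstance, inferInstance, inferInstance,
    ∏ u : Fin m, (Polynomial.X - Polynomial.C (w u)), isCA_of_vec w T hwcond, ?_⟩
  rintro ⟨b, hb⟩
  have hwa0 : w a0 = 0 := by rw [hwdef]; show ψ (zz a0) = 0; rw [hzza0, map_zero]
  have hwj : w j = 1 := by rw [hwdef]; show ψ (zz j) = 1; rw [hzzj, map_one]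
  have hb0 : b = 0 := by
    have h0 : Polynomial.eval (0 : Ω) (∏ u : Fin m, (Polynomial.X - Polynomial.C (w u))) = 0 := by
      rw [Polynomial.eval_prod]
      apply Finset.prod_eq_zero (Finset.mem_univ a0)
      simp [hwa0]
    rw [hb] at h0
    rw [Polynomial.eval_pow] at h0
    have := pow_eq_zero_iff (n := m) (by omega) |>.mp h0
    simpa using this
  have hb1 : b = 1 := by
    have h0 : Polynomial.eval (1 : Ω) (∏ u : Fin m, (Polynomial.X - Polynomial.C (w u))) = 0 := by
      rw [Polynomial.eval_prod]
      apply Finset.prod_eq_zero (Finset.mem_univ j)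
      simp [hwj]
    rw [hb] at h0
    rw [Polynomial.eval_pow] at h0
    have := pow_eq_zero_iff (n := m) (by omega) |>.mp h0
    have h2 : (1 : Ω) - b = 0 := by simpa using this
    have := sub_eq_zero.mp h2
    exact this.symm
  rw [hb0] at hb1
  exact one_ne_zero hb1.symm



section CharPHelpers
variable {Ω : Type} [Field Ω] {p : ℕ} [Fact p.Prime] [CharP Ω p]

theorem choose_cast_zero (a b : ℕ) (ha : a % p = 0) (hb : b % p ≠ 0) :
    ((Nat.choose a b : Ω)) = 0 := by
  have h := Choose.choose_modEq_choose_mod_mul_choose_div_nat (n := a) (k := b) (p := p)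
  rw [ha] at h
  have hb0 : Nat.choose 0 (b % p) = 0 := Nat.choose_eq_zero_of_lt (Nat.pos_of_ne_zero hb)
  rw [hb0, zero_mul] at h
  have : p ∣ Nat.choose a b := (Nat.modEq_zero_iff_dvd).mp h
  exact (CharP.cast_eq_zero_iff Ω p _).mpr this

theorem choose_cast_mul (a b : ℕ) :
    ((Nat.choose (p * a) (p * b) : Ω)) = (Nat.choose a b : Ω) := by
  have hppos : 0 < p := (Fact.out : p.Prime).pos
  have h := Choose.choose_modEq_choose_mod_mul_choose_div_nat (n := p * a) (k := p * b) (p := p)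
  rw [Nat.mul_mod_right, Nat.mul_mod_right, Nat.mul_div_cancel_left a hppos,
    Nat.mul_div_cancel_left b hppos, Nat.choose_self, one_mul] at h
  exact (CharP.natCast_eq_natCast Ω p).mpr h

theorem natCast_pow_char (n : ℕ) : ((n : Ω)) ^ p = (n : Ω) := by
  have h1 : ((n ^ p : ℕ) : Ω) = ((n : ℕ) : Ω) := by
    apply (CharP.natCast_eq_natCast Ω p).mpr
    have := ZMod.pow_card (n : ZMod p)
    have h2 : ((n ^ p : ℕ) : ZMod p) = ((n : ℕ) : ZMod p) := by push_cast; rw [this]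
    exact (ZMod.natCast_eq_natCast_iff _ _ _).mp h2
  push_cast at h1
  exact h1

theorem hasse_pow (k : ℕ) (u : Polynomial Ω) :
    hasseDeriv (p * k) (u ^ p) = (hasseDeriv k u) ^ p := by
  have hppos : 0 < p := (Fact.out : p.Prime).pos
  have hup : u ^ p = expand Ω p (Polynomial.map (frobenius Ω p) u) := by
    rw [← Polynomial.map_expand, Polynomial.map_frobenius_expand]
  have hrhs : (hasseDeriv k u) ^ p
      = expand Ω p (Polynomial.map (frobenius Ω p) (hasseDeriv k u)) := by
    rw [← Polynomial.map_expand, Polynomial.map_frobenius_expand]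
  ext e
  rw [Polynomial.hasseDeriv_coeff, hup, hrhs, Polynomial.coeff_expand hppos, Polynomial.coeff_expand hppos]
  by_cases hpe : p ∣ e
  · obtain ⟨e', rfl⟩ := hpe
    have h1 : p ∣ p * e' + p * k := Dvd.dvd.add (Dvd.intro e' rfl) (Dvd.intro k rfl)
    rw [if_pos h1, if_pos (Dvd.intro e' rfl)]
    have h2 : (p * e' + p * k) / p = e' + k := by
      rw [← Nat.left_distrib, Nat.mul_div_cancel_left _ hppos]
    have h3 : (p * e') / p = e' := Nat.mul_div_cancel_left _ hppos
    rw [h2, h3, Polynomial.coeff_map, Polynomial.coeff_map, Polynomial.hasseDeriv_coeff]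
    rw [frobenius_def, frobenius_def, mul_pow]
    have h4 : p * e' + p * k = p * (e' + k) := by ring
    rw [h4, choose_cast_mul, natCast_pow_char]
  · rw [if_neg hpe]
    have h1 : ¬ p ∣ (e + p * k) := by
      intro hd
      apply hpe
      have h2 : p ∣ p * k := Dvd.intro k rfl
      exact (Nat.dvd_add_right h2).mp (by rwa [add_comm] at hd)
    rw [if_neg h1, mul_zero]

end CharPHelpers

/-- Descent: in characteristic `p`, a Casas–Alvero polynomial of degree `M` divisible by `p`
is a `p`-th power of a Casas–Alvero polynomial of degree `M / p`. -/
theorem descent {Ω : Type} [Field Ω] [IsAlgClosed Ω] {p : ℕ} (hp : p.Prime) [CharP Ω p]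
    {M : ℕ} (hM : p ∣ M) (hM0 : 0 < M) {f : Polynomial Ω} (hf : IsCasasAlvero M f) :
    ∃ u : Polynomial Ω, IsCasasAlvero (M / p) u ∧ f = u ^ p := by
  haveI : Fact p.Prime := ⟨hp⟩
  obtain ⟨hmon, hdeg, hca⟩ := hf
  -- step 1 : the coefficients at indices ≢ 0 mod p vanish
  have key : ∀ k, 0 < k → k < M → ¬ p ∣ k → f.coeff (M - k) = 0 := by
    intro k
    induction k using Nat.strong_induction_on with
    | _ k IH =>
      intro hk0 hkM hpk
      have hCform : hasseDeriv (M - k) f = Polynomial.C (f.coeff (M - k)) := by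
        ext n
        rw [Polynomial.hasseDeriv_coeff, Polynomial.coeff_C]
        by_cases hn : n = 0
        · subst hn
          rw [zero_add, Nat.choose_self]
          simp
        · rw [if_neg hn]
          rcases lt_trichotomy (n + (M - k)) M with h | h | h
          · set t := k - n with ht
            have hnk : n < k := by omega
            have ht0 : 0 < t := by omega
            have htM : t < M := by omega
            have haMt : n + (M - k) = M - t := by omega
            by_cases hpt : p ∣ t
            · have hamod : (n + (M - k)) % p = 0 := by
                rw [haMt]
                have : p ∣ M - t := Nat.dvd_sub hM hpt
                omega
              have hbmod : (M - k) % p ≠ 0 := by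
                intro hc
                apply hpk
                have h1 : p ∣ M - k := Nat.dvd_of_mod_eq_zero hc
                have h2 : p ∣ M - (M - k) := Nat.dvd_sub hM h1
                have h3 : M - (M - k) = k := by omega
                rwa [h3] at h2
              rw [choose_cast_zero (p := p) _ _ hamod hbmod, zero_mul]
            · have := IH t (by omega) ht0 htM hpt
              rw [← haMt] at this
              rw [this, mul_zero]
          · -- n + (M - k) = M
            have hamod : (n + (M - k)) % p = 0 := by
              rw [h]
              omega
            have hbmod : (M - k) % p ≠ 0 := by
              intro hc
              apply hpk
              have h1 : p ∣ M - k := Nat.dvd_of_mod_eq_zero hc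
              have h2 : p ∣ M - (M - k) := Nat.dvd_sub hM h1
              have h3 : M - (M - k) = k := by omega
              rwa [h3] at h2
            rw [choose_cast_zero (p := p) _ _ hamod hbmod, zero_mul]
          · rw [Polynomial.coeff_eq_zero_of_natDegree_lt (by omega : f.natDegree < n + (M - k)), mul_zero]
      obtain ⟨g, hg0, -, hgh⟩ := hca (M - k) (Finset.mem_Ioo.mpr ⟨by omega, by omega⟩)
      rw [hCform] at hgh
      by_contra hne
      have hCne : Polynomial.C (f.coeff (M - k)) ≠ 0 := fun hc => hne (by
        have := Polynomial.C_eq_zero.mp hc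
        exact this)
      have hgle : g.degree ≤ 0 := (Polynomial.degree_le_of_dvd hgh hCne).trans Polynomial.degree_C_le
      exact absurd (hg0.trans_le hgle) (lt_irrefl _)
  -- step 2 : f' = 0
  have hderiv : derivative f = 0 := by
    ext n
    rw [Polynomial.coeff_derivative, Polynomial.coeff_zero]
    by_cases hpn : p ∣ (n + 1)
    · have : ((n : Ω) + 1) = 0 := by
        have := (CharP.cast_eq_zero_iff Ω p (n + 1)).mpr hpn
        push_cast at this
        exact this
      rw [this, mul_zero]
    · have hc : f.coeff (n + 1) = 0 := by
        rcases lt_trichotomy (n + 1) M with h | h | h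
        · have := key (M - (n + 1)) (by omega) (by omega) (by
            intro hd
            apply hpn
            have := Nat.dvd_sub hM hd
            have h3 : M - (M - (n+1)) = n + 1 := by omega
            rwa [h3] at this)
          have h4 : M - (M - (n + 1)) = n + 1 := by omega
          rwa [h4] at this
        · exact absurd (h ▸ hM) hpn
        · exact Polynomial.coeff_eq_zero_of_natDegree_lt (by omega)
      rw [hc, zero_mul]
  -- step 3 : extract the p-th root
  have hcontract : expand Ω p (contract p f) = f := Polynomial.expand_contract p hderiv hp.ne_zero
  set u : Polynomial Ω :=
    (contract p f).map ((frobeniusEquiv Ω p).symm : Ω ≃+* Ω).toRingHom with hu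
  have hmapu : Polynomial.map (frobenius Ω p) u = contract p f := by
    rw [hu, Polynomial.map_map]
    have hcomp : (frobenius Ω p).comp ((frobeniusEquiv Ω p).symm : Ω ≃+* Ω).toRingHom
        = RingHom.id Ω := by
      ext x
      simp only [RingHom.comp_apply, RingEquiv.toRingHom_eq_coe, RingHom.coe_coe,
        RingHom.id_apply]
      have : frobenius Ω p ((frobeniusEquiv Ω p).symm x) =
          frobeniusEquiv Ω p ((frobeniusEquiv Ω p).symm x) := rfl
      rw [this, RingEquiv.apply_symm_apply]
    rw [hcomp, Polynomial.map_id]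
  have hfu : f = u ^ p := by
    calc f = expand Ω p (contract p f) := hcontract.symm
    _ = expand Ω p (Polynomial.map (frobenius Ω p) u) := by rw [hmapu]
    _ = Polynomial.map (frobenius Ω p) (expand Ω p u) := map_expand.symm
    _ = u ^ p := Polynomial.map_frobenius_expand p u
  have hu0 : u ≠ 0 := by
    intro h
    rw [h, zero_pow hp.ne_zero] at hfu
    exact hmon.ne_zero hfu
  have humon : u.Monic := by
    have h1 : u.leadingCoeff ^ p = 1 := by
      have := hmon
      rw [Monic, hfu, Polynomial.leadingCoeff_pow] at this
      exact this
    have h2 : frobenius Ω p u.leadingCoeff = frobenius Ω p 1 := by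
      rw [frobenius_def, frobenius_def, h1, one_pow]
    exact frobenius_inj Ω p h2
  have hudeg : u.natDegree = M / p := by
    rw [hfu, Polynomial.natDegree_pow] at hdeg
    rw [← hdeg, Nat.mul_div_cancel_left _ hp.pos]
  refine ⟨u, ⟨humon, hudeg, ?_⟩, hfu⟩
  intro k hk
  rw [Finset.mem_Ioo] at hk
  have hkM : p * k ∈ Finset.Ioo 0 M := by
    rw [Finset.mem_Ioo]
    constructor
    · exact Nat.mul_pos hp.pos hk.1
    · calc p * k < p * (M / p) := by
            exact (Nat.mul_lt_mul_left hp.pos).mpr hk.2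
      _ = M := Nat.mul_div_cancel' hM
  obtain ⟨g, hg0, hgf, hgh⟩ := hca (p * k) hkM
  have hH : hasseDeriv (p * k) f = (hasseDeriv k u) ^ p := by
    rw [hfu]
    exact hasse_pow k u
  obtain ⟨β, hβ⟩ := IsAlgClosed.exists_root g
    (fun h => by rw [h] at hg0; exact lt_irrefl _ hg0)
  have huβ : u.eval β = 0 := by
    have h1 : f.eval β = 0 := Polynomial.eval_eq_zero_of_dvd_of_eval_eq_zero hgf hβ
    rw [hfu, Polynomial.eval_pow] at h1
    exact pow_eq_zero_iff hp.ne_zero |>.mp h1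
  have hhβ : (hasseDeriv k u).eval β = 0 := by
    have h1 : (hasseDeriv (p * k) f).eval β = 0 := Polynomial.eval_eq_zero_of_dvd_of_eval_eq_zero hgh hβ
    rw [hH, Polynomial.eval_pow] at h1
    exact pow_eq_zero_iff hp.ne_zero |>.mp h1
  exact ⟨Polynomial.X - Polynomial.C β, by rw [Polynomial.degree_X_sub_C]; exact zero_lt_one,
    dvd_iff_isRoot.mpr huβ, dvd_iff_isRoot.mpr hhβ⟩


theorem no_ctrex (n : ℕ) (hn : 0 < n) (p : ℕ) (hp : p.Prime)
    (h : ∀ (K : Type) [Field K] [IsAlgClosed K] [CharP K p],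
      ∀ f : Polynomial K, IsCasasAlvero n f →
        ∃ b : K, f = (Polynomial.X - Polynomial.C b) ^ n) (ℓ : ℕ) :
    ∀ (Ω : Type) [Field Ω] [IsAlgClosed Ω] [CharP Ω p],
      ∀ F : Polynomial Ω, IsCasasAlvero (n * p ^ ℓ) F →
        ∃ b : Ω, F = (Polynomial.X - Polynomial.C b) ^ (n * p ^ ℓ) := by
  induction ℓ with
  | zero => simpa using h
  | succ ℓ IH =>
    intro Ω _ _ _ F hF
    have hdvd : p ∣ n * p ^ (ℓ + 1) := ⟨n * p ^ ℓ, by ring⟩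
    have hpos : 0 < n * p ^ (ℓ + 1) := Nat.mul_pos hn (pow_pos hp.pos _)
    obtain ⟨u, hu, hFu⟩ := descent hp hdvd hpos hF
    have hq : n * p ^ (ℓ + 1) / p = n * p ^ ℓ := by
      rw [pow_succ, ← mul_assoc, Nat.mul_div_cancel _ hp.pos]
    rw [hq] at hu
    obtain ⟨b, hb⟩ := IH Ω u hu
    refine ⟨b, ?_⟩
    rw [hFu, hb, ← pow_mul, pow_succ, mul_assoc]

end CAWork

/-- If `CA_{n,p}` holds then so does `CA_{n·p^ℓ, 0}`. -/
theorem CA_np_pow_char_zero (n : ℕ) (hn : 0 < n) (p : ℕ) (hp : p.Prime) (ℓ : ℕ)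
    (h : ∀ (K : Type) [Field K] [IsAlgClosed K] [CharP K p],
      ∀ f : Polynomial K, IsCasasAlvero n f →
        ∃ b : K, f = (Polynomial.X - Polynomial.C b) ^ n) :
    ∀ (K : Type) [Field K] [IsAlgClosed K] [CharP K 0],
      ∀ f : Polynomial K, IsCasasAlvero (n * p ^ ℓ) f →
        ∃ b : K, f = (Polynomial.X - Polynomial.C b) ^ (n * p ^ ℓ) := by
  intro K _ _ _ f hf
  by_cases hm : n * p ^ ℓ = 1
  · obtain ⟨hmon, hdeg, -⟩ := hf
    refine ⟨-f.coeff 0, ?_⟩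
    rw [hm, pow_one]
    have h1 := hmon.eq_X_add_C (hm ▸ hdeg)
    rw [map_neg, sub_neg_eq_add]
    exact h1
  by_contra hcon
  have hm2 : 2 ≤ n * p ^ ℓ := by
    have : 0 < n * p ^ ℓ := Nat.mul_pos hn (pow_pos hp.pos _)
    omega
  obtain ⟨Ω, _, hΩ1, hΩ2, F, hF, hFnt⟩ := CAWork.transfer p hp _ hm2 K f hf hcon
  haveI := hΩ1
  haveI := hΩ2
  exact hFnt (CAWork.no_ctrex n hn p hp h ℓ Ω F hF)
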